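/- If X is distributed as the standard Gaussian measure restricted and normalized to a measurable set K ⊂ ℝⁿ, then E[‖X‖²] ≥ n − 6√n · √(2 log(4/γ_n(K))). -/

import Mathlib

open MeasureTheory Real
open scoped RealInnerProductSpace Pointwise

/-- The standard Gaussian measure on `ℝⁿ`. -/
noncomputable def gauss (n : ℕ) : Measure (EuclideanSpace ℝ (Fin n)) :=
  volume.withDensity (fun x => ENNReal.ofReal ((2 * π) ^ (-(n : ℝ) / 2) * Real.exp (-‖x‖ ^ 2 / 2)))

/-- The Gaussian mean-width `w(K) = E[sup_{x ∈ K} ⟨Γ, x⟩]` of a set `K ⊆ ℝⁿ`. -/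
noncomputable def meanWidth (n : ℕ) (K : Set (EuclideanSpace ℝ (Fin n))) : ℝ :=
  ∫ g, sSup ((fun x => ⟪g, x⟫) '' K) ∂(gauss n)

open scoped NNReal ENNReal


lemma gauss_eq (n : ℕ) : gauss n = volume.withDensity
    (fun x : EuclideanSpace ℝ (Fin n) =>
      ((Real.toNNReal ((2 * π) ^ (-(n : ℝ) / 2) * Real.exp (-‖x‖ ^ 2 / 2)) : ℝ≥0) : ℝ≥0∞)) := rfl

lemma measurable_gd (n : ℕ) : Measurable fun x : EuclideanSpace ℝ (Fin n) =>
    Real.toNNReal ((2 * π) ^ (-(n : ℝ) / 2) * Real.exp (-‖x‖ ^ 2 / 2)) := by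
  fun_prop

lemma integrable_exp_vol (n : ℕ) {b : ℝ} (hb : 0 < b) :
    Integrable (fun x : EuclideanSpace ℝ (Fin n) => rexp (-(b * ‖x‖ ^ 2))) volume := by
  have h := (GaussianFourier.integrable_cexp_neg_mul_sq_norm_add
    (V := EuclideanSpace ℝ (Fin n)) (b := (b : ℂ)) (by simpa using hb) 0 0).norm
  refine h.congr ?_
  filter_upwards with x
  rw [Complex.norm_exp]
  congr 1
  simp [← Complex.ofReal_pow]

lemma integral_gauss_eq (n : ℕ) (g : EuclideanSpace ℝ (Fin n) → ℝ) :
    ∫ x, g x ∂gauss n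
      = ∫ x, ((2 * π) ^ (-(n : ℝ) / 2) * Real.exp (-‖x‖ ^ 2 / 2)) * g x := by
  rw [gauss_eq, integral_withDensity_eq_integral_smul (measurable_gd n)]
  congr 1
  ext x
  rw [NNReal.smul_def, smul_eq_mul, Real.coe_toNNReal _ (by positivity)]

lemma integrable_gauss_iff (n : ℕ) {g : EuclideanSpace ℝ (Fin n) → ℝ} :
    Integrable g (gauss n) ↔
      Integrable (fun x => ((2 * π) ^ (-(n : ℝ) / 2) * Real.exp (-‖x‖ ^ 2 / 2)) * g x)
        volume := by
  rw [gauss_eq, integrable_withDensity_iff_integrable_smul (measurable_gd n)]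
  constructor <;> intro h <;> refine h.congr ?_ <;> filter_upwards with x <;>
    rw [NNReal.smul_def, smul_eq_mul, Real.coe_toNNReal _ (by positivity)]

lemma key_integral (n : ℕ) {b : ℝ} (hb : 0 ≤ b) :
    ∫ x : EuclideanSpace ℝ (Fin n),
        ((2 * π) ^ (-(n : ℝ) / 2) * Real.exp (-‖x‖ ^ 2 / 2)) * rexp (-(b * ‖x‖ ^ 2))
      = (1 + 2 * b) ^ (-(n : ℝ) / 2) := by
  have h1 : ∀ x : EuclideanSpace ℝ (Fin n),
      ((2 * π) ^ (-(n : ℝ) / 2) * Real.exp (-‖x‖ ^ 2 / 2)) * rexp (-(b * ‖x‖ ^ 2))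
        = (2 * π) ^ (-(n : ℝ) / 2) * rexp (-(b + 1/2) * ‖x‖ ^ 2) := by
    intro x
    rw [mul_assoc, ← Real.exp_add]
    ring_nf
  simp_rw [h1]
  rw [integral_const_mul, GaussianFourier.integral_rexp_neg_mul_sq_norm (by positivity),
    finrank_euclideanSpace_fin]
  have h2 : π / (b + 1/2) = (2 * π) / (1 + 2 * b) := by
    rw [div_eq_div_iff (by positivity) (by positivity)]
    ring
  have h2π : (0:ℝ) < 2 * π := by positivity
  have h12b : (0:ℝ) < 1 + 2 * b := by positivity
  rw [h2, Real.div_rpow h2π.le h12b.le, ← mul_div_assoc,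
    ← Real.rpow_add h2π, neg_div, neg_add_cancel, Real.rpow_zero, one_div, ← Real.rpow_neg h12b.le]

lemma integrable_den_exp (n : ℕ) {b : ℝ} (hb : 0 ≤ b) :
    Integrable (fun x : EuclideanSpace ℝ (Fin n) =>
      ((2 * π) ^ (-(n : ℝ) / 2) * Real.exp (-‖x‖ ^ 2 / 2)) * rexp (-(b * ‖x‖ ^ 2)))
      volume := by
  have h := ((integrable_exp_vol n (b := b + 1/2) (by positivity)).const_mul
    ((2 * π) ^ (-(n : ℝ) / 2)))
  refine h.congr ?_
  filter_upwards with x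
  rw [mul_assoc, ← Real.exp_add]
  ring_nf

lemma integrable_exp_gauss (n : ℕ) {b : ℝ} (hb : 0 ≤ b) :
    Integrable (fun x : EuclideanSpace ℝ (Fin n) => rexp (-(b * ‖x‖ ^ 2))) (gauss n) :=
  (integrable_gauss_iff n).2 (integrable_den_exp n hb)

lemma mgf_gauss (n : ℕ) {b : ℝ} (hb : 0 ≤ b) :
    ∫ x, rexp (-(b * ‖x‖ ^ 2)) ∂gauss n = (1 + 2 * b) ^ (-(n : ℝ) / 2) := by
  rw [integral_gauss_eq, key_integral n hb]

instance gauss_prob (n : ℕ) : IsProbabilityMeasure (gauss n) := by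
  constructor
  rw [gauss_eq, withDensity_apply _ MeasurableSet.univ, Measure.restrict_univ]
  have h0 : ∀ x : EuclideanSpace ℝ (Fin n),
      ((Real.toNNReal ((2 * π) ^ (-(n : ℝ) / 2) * Real.exp (-‖x‖ ^ 2 / 2)) : ℝ≥0) : ℝ≥0∞)
        = ENNReal.ofReal (((2 * π) ^ (-(n : ℝ) / 2) * Real.exp (-‖x‖ ^ 2 / 2)) *
            rexp (-((0:ℝ) * ‖x‖ ^ 2))) := by
    intro x
    simp [ENNReal.ofReal]
  simp_rw [h0]
  rw [← ofReal_integral_eq_lintegral_ofReal (integrable_den_exp n le_rfl)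
    (ae_of_all _ fun x => by positivity)]
  rw [key_integral n le_rfl]
  norm_num

lemma integrable_normsq_gauss (n : ℕ) :
    Integrable (fun x : EuclideanSpace ℝ (Fin n) => ‖x‖ ^ 2) (gauss n) := by
  rw [integrable_gauss_iff]
  have hbound := integrable_exp_vol n (b := (1/4 : ℝ)) (by norm_num)
  refine ((hbound.const_mul ((2 * π) ^ (-(n : ℝ) / 2) * (4 / Real.exp 1))).mono ?_ ?_) 
  · exact (Continuous.aestronglyMeasurable (by fun_prop)).mul
      (Continuous.aestronglyMeasurable (by fun_prop))
  · filter_upwards with x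
    set y : ℝ := ‖x‖ ^ 2 with hy
    have hy0 : 0 ≤ y := by positivity
    have hc : (0:ℝ) < (2 * π) ^ (-(n : ℝ) / 2) := by positivity
    rw [Real.norm_eq_abs, Real.norm_eq_abs, abs_of_nonneg (by positivity),
      abs_of_nonneg (by positivity)]
    -- y * exp (-y/2) ≤ (4/e) * exp (-y/4)
    have hz : y / 4 * Real.exp (-(y/4)) ≤ Real.exp (-1) := by
      have h1 : y / 4 ≤ Real.exp (y / 4 - 1) := by
        have := Real.add_one_le_exp (y / 4 - 1)
        linarith
      calc y / 4 * Real.exp (-(y/4)) ≤ Real.exp (y/4 - 1) * Real.exp (-(y/4)) :=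
            mul_le_mul_of_nonneg_right h1 (Real.exp_pos _).le
        _ = Real.exp (-1) := by rw [← Real.exp_add]; ring_nf
    have hkey : Real.exp (-y / 2) * y ≤ 4 / Real.exp 1 * Real.exp (-(1/4 * y)) := by
      have hsplit : Real.exp (-y / 2) = Real.exp (-(y/4)) * Real.exp (-(y/4)) := by
        rw [← Real.exp_add]; ring_nf
      have h2 : Real.exp (-(y/4)) * y ≤ 4 * Real.exp (-1) := by
        nlinarith [Real.exp_pos (-(y/4))]
      have h3 : (0:ℝ) < Real.exp (-(y/4)) := Real.exp_pos _
      have h4 : Real.exp (-(1/4 * y)) = Real.exp (-(y/4)) := by ring_nf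
      rw [hsplit, h4]
      calc Real.exp (-(y/4)) * Real.exp (-(y/4)) * y
          = Real.exp (-(y/4)) * (Real.exp (-(y/4)) * y) := by ring
        _ ≤ Real.exp (-(y/4)) * (4 * Real.exp (-1)) := mul_le_mul_of_nonneg_left h2 h3.le
        _ = 4 / Real.exp 1 * Real.exp (-(y/4)) := by rw [Real.exp_neg (1:ℝ)]; ring
    calc (2 * π) ^ (-(n : ℝ) / 2) * Real.exp (-y / 2) * y
        = (2 * π) ^ (-(n : ℝ) / 2) * (Real.exp (-y / 2) * y) := by ring
      _ ≤ (2 * π) ^ (-(n : ℝ) / 2) * (4 / Real.exp 1 * Real.exp (-(1/4 * y))) := by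
          exact mul_le_mul_of_nonneg_left hkey hc.le
      _ = (2 * π) ^ (-(n : ℝ) / 2) * (4 / Real.exp 1) * Real.exp (-(1/4 * y)) := by ring

set_option maxHeartbeats 1000000 in
theorem stmt12 (n : ℕ) (K : Set (EuclideanSpace ℝ (Fin n))) (hm : MeasurableSet K)
    (hpos : 0 < gauss n K) :
    (n : ℝ) - 6 * Real.sqrt n * Real.sqrt (2 * Real.log (4 / (gauss n K).toReal)) ≤
      (gauss n K).toReal⁻¹ * ∫ x in K, ‖x‖ ^ 2 ∂(gauss n) := by
  have hfin : gauss n K ≠ ⊤ := measure_ne_top _ _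
  set g := (gauss n K).toReal with hgdef
  have hg0 : 0 < g := ENNReal.toReal_pos hpos.ne' hfin
  have hg1 : g ≤ 1 := by
    have h := measure_mono (Set.subset_univ K) (μ := gauss n)
    have h2 := ENNReal.toReal_mono (by simp) h
    simpa using h2
  have h4g : 1 < 4 / g := by rw [lt_div_iff₀ hg0]; linarith
  have hlogpos : 0 < Real.log (4 / g) := Real.log_pos h4g
  set t := Real.sqrt (2 * Real.log (4 / g)) with htdef
  have ht0 : 0 ≤ t := Real.sqrt_nonneg _
  have ht2 : t ^ 2 = 2 * Real.log (4 / g) := Real.sq_sqrt (by positivity)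
  clear_value t
  have hlog4 : (1:ℝ) ≤ Real.log (4 / g) := by
    have h1 : (1:ℝ) ≤ Real.log 4 := by
      rw [Real.le_log_iff_exp_le (by norm_num)]
      exact Real.exp_one_lt_d9.le.trans (by norm_num)
    have h2 : Real.log 4 ≤ Real.log (4 / g) := by
      apply Real.log_le_log (by norm_num)
      rw [le_div_iff₀ hg0]; linarith
    linarith
  have ht1 : 1 ≤ t := by nlinarith
  have hexp_t : Real.exp (-(t ^ 2 / 2)) = g / 4 := by
    rw [ht2]
    have he : -(2 * Real.log (4 / g) / 2) = -Real.log (4 / g) := by ring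
    rw [he, Real.exp_neg, Real.exp_log (by positivity), inv_div]
  have hIntK : IntegrableOn (fun x : EuclideanSpace ℝ (Fin n) => ‖x‖ ^ 2) K (gauss n) :=
    (integrable_normsq_gauss n).integrableOn
  have hInn : 0 ≤ ∫ x in K, ‖x‖ ^ 2 ∂gauss n :=
    setIntegral_nonneg hm fun x _ => by positivity
  rcases Nat.eq_zero_or_pos n with hn | hn
  · subst hn
    simpa using mul_nonneg (inv_nonneg.2 hg0.le) hInn
  · have hn0 : (0:ℝ) < n := by exact_mod_cast hn
    set s := Real.sqrt n with hsdef
    have hs0 : 0 < s := Real.sqrt_pos.2 hn0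
    have hs2 : s ^ 2 = n := Real.sq_sqrt hn0.le
    clear_value s
    set l := t / (2 * s) with hldef
    have hl0 : 0 < l := div_pos (lt_of_lt_of_le one_pos ht1) (by positivity)
    clear_value l
    set a := (n : ℝ) - 2 * s * t with hadef
    clear_value a
    set C := Real.exp (l * a - 1) / l with hCdef
    have hC0 : 0 ≤ C := by positivity
    clear_value C
    have hpt : ∀ x : EuclideanSpace ℝ (Fin n),
        a ≤ ‖x‖ ^ 2 + C * rexp (-(l * ‖x‖ ^ 2)) := by
      intro x
      set y := ‖x‖ ^ 2 with hy
      have hy0 : 0 ≤ y := by positivity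
      rcases le_or_gt a y with h | h
      · have hpos' : 0 ≤ C * rexp (-(l * y)) := by positivity
        linarith
      · have h1 : l * (a - y) ≤ Real.exp (l * (a - y) - 1) := by
          have := Real.add_one_le_exp (l * (a - y) - 1); linarith
        have h2 : a - y ≤ Real.exp (l * (a - y) - 1) / l := by
          rw [le_div_iff₀ hl0, mul_comm]; exact h1
        have h3 : C * rexp (-(l * y)) = Real.exp (l * (a - y) - 1) / l := by
          rw [hCdef, div_mul_eq_mul_div, ← Real.exp_add]
          congr 2
          ring
        linarith
    have hintexp : Integrable (fun x : EuclideanSpace ℝ (Fin n) => rexp (-(l * ‖x‖ ^ 2)))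
        (gauss n) := integrable_exp_gauss n hl0.le
    have hintc : IntegrableOn (fun _ : EuclideanSpace ℝ (Fin n) => a) K (gauss n) :=
      integrableOn_const hfin
    have step1 : a * g ≤ (∫ x in K, ‖x‖ ^ 2 ∂gauss n)
        + C * ∫ x in K, rexp (-(l * ‖x‖ ^ 2)) ∂gauss n := by
      have h1 := setIntegral_mono_on hintc
        (hIntK.add ((hintexp.const_mul C).integrableOn)) hm (fun x _ => hpt x)
      simp only [Pi.add_apply] at h1
      rw [setIntegral_const] at h1
      rw [integral_add hIntK ((hintexp.const_mul C).integrableOn), integral_const_mul] at h1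
      calc a * g = (gauss n K).toReal • a := by rw [smul_eq_mul, ← hgdef]; ring
        _ ≤ _ := h1
    have step2 : ∫ x in K, rexp (-(l * ‖x‖ ^ 2)) ∂gauss n ≤ (1 + 2 * l) ^ (-(n : ℝ) / 2) := by
      rw [← mgf_gauss n hl0.le]
      exact setIntegral_le_integral hintexp (ae_of_all _ fun x => (Real.exp_pos _).le)
    have h12l : (0:ℝ) < 1 + 2 * l := by positivity
    have hlog_lb : 2 * l - (2 * l) ^ 2 ≤ Real.log (1 + 2 * l) := by
      have h := Real.one_sub_inv_le_log_of_pos h12l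
      have h2 : 2 * l - (2 * l) ^ 2 ≤ 1 - (1 + 2 * l)⁻¹ := by
        have he : 1 - (1 + 2 * l)⁻¹ = 2 * l / (1 + 2 * l) := by field_simp; ring
        rw [he, le_div_iff₀ h12l]; nlinarith [hl0.le]
      linarith
    have hexp_bound : C * (1 + 2 * l) ^ (-(n : ℝ) / 2) ≤ 4 * s * t * g := by
      rw [Real.rpow_def_of_pos h12l, hCdef, div_mul_eq_mul_div, ← Real.exp_add]
      have he1 : l * s = t / 2 := by rw [hldef]; field_simp
      have he2 : l ^ 2 * (n : ℝ) = t ^ 2 / 4 := by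
        rw [hldef, ← hs2]; field_simp; ring
      have hmul : Real.log (1 + 2 * l) * (-(n : ℝ) / 2)
          ≤ (2 * l - (2 * l) ^ 2) * (-(n : ℝ) / 2) :=
        mul_le_mul_of_nonpos_right hlog_lb (by linarith)
      have heq : l * a - 1 + (2 * l - (2 * l) ^ 2) * (-(n : ℝ) / 2) = -1 - t ^ 2 / 2 := by
        rw [hadef]
        linear_combination (-2 * t) * he1 + 2 * he2
      have hexpo : l * a - 1 + Real.log (1 + 2 * l) * (-(n : ℝ) / 2) ≤ -1 - t ^ 2 / 2 := by
        linarith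
      have h5 : Real.exp (l * a - 1 + Real.log (1 + 2 * l) * (-(n : ℝ) / 2))
          ≤ Real.exp (-1) * (g / 4) := by
        have he : Real.exp (-1 - t ^ 2 / 2) = Real.exp (-1) * (g / 4) := by
          rw [← hexp_t, ← Real.exp_add]; congr 1
        exact (Real.exp_le_exp.2 hexpo).trans_eq he
      have hte : Real.exp (-1:ℝ) ≤ 1 := Real.exp_le_one_iff.2 (by norm_num)
      have h6 : Real.exp (l * a - 1 + Real.log (1 + 2 * l) * (-(n : ℝ) / 2)) / l
          ≤ (Real.exp (-1) * (g / 4)) / l := (div_le_div_iff_of_pos_right hl0).2 h5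
      have h7 : (Real.exp (-1) * (g / 4)) / l ≤ 4 * s * t * g := by
        rw [div_le_iff₀ hl0]
        have he : 4 * s * t * g * l = 2 * t ^ 2 * g := by
          rw [hldef]; field_simp; ring
        rw [he]
        nlinarith [mul_le_mul_of_nonneg_right hte hg0.le, hg0.le, ht1]
      linarith
    have final1 : a * g ≤ (∫ x in K, ‖x‖ ^ 2 ∂gauss n) + 4 * s * t * g := by
      have h8 := mul_le_mul_of_nonneg_left step2 hC0
      linarith
    rw [hadef] at final1
    rw [inv_mul_eq_div, le_div_iff₀ hg0]
    linarith
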